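/- For every constant R with 0 < R < 1, the 2-form ω_B on ℝ⁴ is closed and self-dual at every point: for every p ∈ ℝ⁴ and all u,v,w ∈ ℝ⁴ one has (fderiv ω_B p u)(v,w) − (fderiv ω_B p v)(u,w) + (fderiv ω_B p w)(u,v) = 0, and at every point ω_B(e₀,e₁)=ω_B(e₂,e₃), ω_B(e₀,e₂)=ω_B(e₃,e₁), ω_B(e₀,e₃)=ω_B(e₁,e₂). -/

import Mathlib

noncomputable section

/-- The standard basis vectors of ℝ⁴ (coordinates (θ,x₁,x₂,x₃)). -/
def e (i : Fin 4) : Fin 4 → ℝ := Pi.single i 1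

/-- The 2-form ω_B (depending on a constant R), whose self-dual components are
ω_B(e₀,e₁) = (x₁cos θ + x₂sin θ)e^{x₃} − R·x₁, ω_B(e₀,e₂) = (x₁sin θ − x₂cos θ)e^{x₃},
ω_B(e₀,e₃) = R·x₃, at the point p = (θ,x₁,x₂,x₃). -/
def omegaB (R : ℝ) (p u v : Fin 4 → ℝ) : ℝ :=
  ((p 1 * Real.cos (p 0) + p 2 * Real.sin (p 0)) * Real.exp (p 3) - R * p 1)
    * (u 0 * v 1 - u 1 * v 0 + u 2 * v 3 - u 3 * v 2)
  + ((p 1 * Real.sin (p 0) - p 2 * Real.cos (p 0)) * Real.exp (p 3))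
    * (u 0 * v 2 - u 2 * v 0 + u 3 * v 1 - u 1 * v 3)
  + (R * p 3) * (u 0 * v 3 - u 3 * v 0 + u 1 * v 2 - u 2 * v 1)

/-- Coordinate projections as continuous linear maps. -/
noncomputable def P (i : Fin 4) : (Fin 4 → ℝ) →L[ℝ] ℝ := ContinuousLinearMap.proj i

/-- Explicit formula for the directional derivative of ω_B(·)(v,w). -/
lemma key (R : ℝ) (p v w u : Fin 4 → ℝ) :
    fderiv ℝ (fun q => omegaB R q v w) p u =
    ((u 1 * Real.cos (p 0) + p 1 * (-Real.sin (p 0)) * u 0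
        + u 2 * Real.sin (p 0) + p 2 * Real.cos (p 0) * u 0) * Real.exp (p 3)
      + (p 1 * Real.cos (p 0) + p 2 * Real.sin (p 0)) * Real.exp (p 3) * u 3
      - R * u 1)
      * (v 0 * w 1 - v 1 * w 0 + v 2 * w 3 - v 3 * w 2)
  + ((u 1 * Real.sin (p 0) + p 1 * Real.cos (p 0) * u 0
        - u 2 * Real.cos (p 0) - p 2 * (-Real.sin (p 0)) * u 0) * Real.exp (p 3)
      + (p 1 * Real.sin (p 0) - p 2 * Real.cos (p 0)) * Real.exp (p 3) * u 3)
      * (v 0 * w 2 - v 2 * w 0 + v 3 * w 1 - v 1 * w 3)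
  + (R * u 3) * (v 0 * w 3 - v 3 * w 0 + v 1 * w 2 - v 2 * w 1) := by
  have hP : ∀ i, HasFDerivAt (fun q : Fin 4 → ℝ => q i) (P i) p :=
    fun i => (P i).hasFDerivAt
  have hcos : HasFDerivAt (fun q : Fin 4 → ℝ => Real.cos (q 0))
      ((-Real.sin (p 0)) • P 0) p :=
    by have := (Real.hasDerivAt_cos (p 0)).comp_hasFDerivAt p (hP 0); exact this
  have hsin : HasFDerivAt (fun q : Fin 4 → ℝ => Real.sin (q 0))
      ((Real.cos (p 0)) • P 0) p :=
    by have := (Real.hasDerivAt_sin (p 0)).comp_hasFDerivAt p (hP 0); exact this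
  have hexp : HasFDerivAt (fun q : Fin 4 → ℝ => Real.exp (q 3))
      ((Real.exp (p 3)) • P 3) p :=
    by have := (Real.hasDerivAt_exp (p 3)).comp_hasFDerivAt p (hP 3); exact this
  have hA := ((((hP 1).mul hcos).add ((hP 2).mul hsin)).mul hexp).sub
    ((hP 1).const_mul R)
  have hG := ((((hP 1).mul hsin).sub ((hP 2).mul hcos)).mul hexp)
  have hH := (hP 3).const_mul R
  have h := ((hA.mul_const (v 0 * w 1 - v 1 * w 0 + v 2 * w 3 - v 3 * w 2)).add
      (hG.mul_const (v 0 * w 2 - v 2 * w 0 + v 3 * w 1 - v 1 * w 3))).add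
      (hH.mul_const (v 0 * w 3 - v 3 * w 0 + v 1 * w 2 - v 2 * w 1))
  have h' : HasFDerivAt (fun q => omegaB R q v w) _ p := h
  rw [h'.fderiv]
  simp [P, ContinuousLinearMap.proj]
  ring

/-- For every 0 < R < 1, the 2-form ω_B is closed and self-dual at every point. -/
theorem omegaB_closed_selfDual (R : ℝ) (hR0 : 0 < R) (hR1 : R < 1) :
    (∀ p u v w : Fin 4 → ℝ,
      fderiv ℝ (fun q => omegaB R q v w) p u
      - fderiv ℝ (fun q => omegaB R q u w) p v
      + fderiv ℝ (fun q => omegaB R q u v) p w = 0) ∧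
    (∀ p : Fin 4 → ℝ,
      omegaB R p (e 0) (e 1) = omegaB R p (e 2) (e 3) ∧
      omegaB R p (e 0) (e 2) = omegaB R p (e 3) (e 1) ∧
      omegaB R p (e 0) (e 3) = omegaB R p (e 1) (e 2)) := by
  constructor
  · intro p u v w
    rw [key, key, key]
    ring
  · intro p
    refine ⟨?_, ?_, ?_⟩ <;> simp [omegaB, e, Pi.single_apply]
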